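/- arXiv:2201.00119 — 6 statements merged into one kernel-verified Lean document; each statement's English description precedes it below -/
import Mathlib

section
/- Let p ≥ 1, let w₁, w₂ ∈ ℂ with Re(w₁) ≥ 0 and Re(w₂) ≥ 0, let A be a p×p Hermitian positive semidefinite complex matrix, let B be any p×p complex matrix, and let q ∈ ℂ^p. Then the matrices w₁A + I and w₂A + I are invertible, and |q*B(w₁A+I)⁻¹q − q*B(w₂A+I)⁻¹q| ≤ |w₁ − w₂| · |q|² · ‖B‖ · ‖A‖. -/
open Matrix
open scoped Matrix.Norms.L2Operator ComplexOrder

section helpers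
variable {p : ℕ}

lemma coercive {w : ℂ} (hw : 0 ≤ w.re) {A : Matrix (Fin p) (Fin p) ℂ}
    (hA : A.PosSemidef) (x : EuclideanSpace ℂ (Fin p)) :
    ‖x‖ ^ 2 ≤ ‖(EuclideanSpace.equiv (Fin p) ℂ).symm ((w • A + 1) *ᵥ (x : Fin p → ℂ))‖ * ‖x‖ := by
  set y : EuclideanSpace ℂ (Fin p) :=
    (EuclideanSpace.equiv (Fin p) ℂ).symm ((w • A + 1) *ᵥ (x : Fin p → ℂ))
  have hyx : (inner ℂ x y : ℂ) = star (x : Fin p → ℂ) ⬝ᵥ ((w • A + 1) *ᵥ (x : Fin p → ℂ)) := by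
    rw [EuclideanSpace.inner_eq_star_dotProduct, dotProduct_comm]; rfl
  have hxx : (star (x : Fin p → ℂ) ⬝ᵥ (x : Fin p → ℂ)) = (inner ℂ x x : ℂ) := by
    rw [EuclideanSpace.inner_eq_star_dotProduct, dotProduct_comm]
  have hinner : (inner ℂ x y : ℂ) =
      w * (star (x : Fin p → ℂ) ⬝ᵥ (A *ᵥ (x : Fin p → ℂ))) + (inner ℂ x x : ℂ) := by
    rw [hyx, add_mulVec, smul_mulVec, one_mulVec, dotProduct_add, dotProduct_smul,
      hxx, smul_eq_mul]
  have ha := hA.dotProduct_mulVec_nonneg (x : Fin p → ℂ)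
  rw [Complex.nonneg_iff] at ha
  have hre : (‖x‖ : ℝ) ^ 2 ≤ (inner ℂ x y : ℂ).re := by
    rw [hinner]
    have hself : ((inner ℂ x x : ℂ)).re = ‖x‖ ^ 2 := by
      exact inner_self_eq_norm_sq (𝕜 := ℂ) x
    simp only [Complex.add_re, Complex.mul_re, ← ha.2, mul_zero, sub_zero, hself]
    nlinarith [mul_nonneg hw ha.1]
  calc (‖x‖ : ℝ) ^ 2 ≤ (inner ℂ x y : ℂ).re := hre
    _ ≤ ‖(inner ℂ x y : ℂ)‖ := Complex.re_le_norm _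
    _ = ‖(inner ℂ x y : ℂ)‖ := rfl
    _ ≤ ‖x‖ * ‖y‖ := norm_inner_le_norm x y
    _ = ‖y‖ * ‖x‖ := mul_comm _ _

lemma isUnit_wA_add_one {w : ℂ} (hw : 0 ≤ w.re) {A : Matrix (Fin p) (Fin p) ℂ}
    (hA : A.PosSemidef) : IsUnit (w • A + 1) := by
  rw [← Matrix.mulVec_injective_iff_isUnit]
  intro x y hxy
  have h : (w • A + 1) *ᵥ (x - y) = 0 := by
    rw [mulVec_sub, hxy, sub_self]
  set z : EuclideanSpace ℂ (Fin p) := (EuclideanSpace.equiv (Fin p) ℂ).symm (x - y)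
  have hz : (z : Fin p → ℂ) = x - y := rfl
  have hco := coercive hw hA z
  rw [hz, h] at hco
  simp only [map_zero, norm_zero, zero_mul] at hco
  have h2 : ‖z‖ ^ 2 = 0 := le_antisymm hco (sq_nonneg _)
  have hz0 : z = 0 := norm_eq_zero.mp (by nlinarith [norm_nonneg z, sq_nonneg ‖z‖])
  have : x - y = 0 := by rw [← hz, hz0]; rfl
  exact sub_eq_zero.mp this

lemma inv_norm_le_one {w : ℂ} (hw : 0 ≤ w.re) {A : Matrix (Fin p) (Fin p) ℂ}
    (hA : A.PosSemidef) : ‖(w • A + 1)⁻¹‖ ≤ 1 := by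
  have hu := isUnit_wA_add_one hw hA
  rw [Matrix.l2_opNorm_def]
  apply ContinuousLinearMap.opNorm_le_bound _ zero_le_one
  intro y
  rw [one_mul]
  set M := w • A + 1
  set x : EuclideanSpace ℂ (Fin p) := (EuclideanSpace.equiv (Fin p) ℂ).symm (M⁻¹ *ᵥ (y : Fin p → ℂ))
  have hMx : M *ᵥ (x : Fin p → ℂ) = (y : Fin p → ℂ) := by
    show M *ᵥ (M⁻¹ *ᵥ (y : Fin p → ℂ)) = _
    rw [mulVec_mulVec, Matrix.mul_nonsing_inv _ ((Matrix.isUnit_iff_isUnit_det _).mp hu),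
      one_mulVec]
  have hco := coercive hw hA x
  rw [hMx] at hco
  have hyy : (EuclideanSpace.equiv (Fin p) ℂ).symm (y : Fin p → ℂ) = y := rfl
  rw [hyy] at hco
  have hx : ‖x‖ ≤ ‖y‖ := by
    rcases eq_or_lt_of_le (norm_nonneg x) with h0 | h0
    · rw [← h0]; exact norm_nonneg y
    · nlinarith
  exact hx

end helpers

/-- **Lemma 1.** Let `w₁, w₂ ∈ ℂ` with nonnegative real parts, `A` a `p × p` Hermitian
positive semidefinite complex matrix, `B` any `p × p` complex matrix, and `q ∈ ℂ^p`.
Then `w₁A + I` and `w₂A + I` are invertible, and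
`|q*B(w₁A+I)⁻¹q − q*B(w₂A+I)⁻¹q| ≤ |w₁ − w₂| · |q|² · ‖B‖ · ‖A‖`,
where `‖·‖` is the operator norm and `|q|` the Euclidean norm. -/
theorem quadratic_form_resolvent_perturbation
    {p : ℕ} (hp : 1 ≤ p) (w₁ w₂ : ℂ) (hw₁ : 0 ≤ w₁.re) (hw₂ : 0 ≤ w₂.re)
    (A B : Matrix (Fin p) (Fin p) ℂ) (hA : A.PosSemidef)
    (q : EuclideanSpace ℂ (Fin p)) :
    IsUnit (w₁ • A + 1) ∧ IsUnit (w₂ • A + 1) ∧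
      ‖((star (q : Fin p → ℂ)) ⬝ᵥ ((B * (w₁ • A + 1)⁻¹) *ᵥ (q : Fin p → ℂ)) -
            (star (q : Fin p → ℂ)) ⬝ᵥ ((B * (w₂ • A + 1)⁻¹) *ᵥ (q : Fin p → ℂ)))‖
        ≤ ‖w₁ - w₂‖ * ‖q‖ ^ 2 * ‖B‖ * ‖A‖ := by
  have hu1 := isUnit_wA_add_one hw₁ hA
  have hu2 := isUnit_wA_add_one hw₂ hA
  refine ⟨hu1, hu2, ?_⟩
  set M₁ := w₁ • A + 1 with hM₁
  set M₂ := w₂ • A + 1 with hM₂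
  have hd1 : IsUnit M₁.det := (Matrix.isUnit_iff_isUnit_det _).mp hu1
  have hd2 : IsUnit M₂.det := (Matrix.isUnit_iff_isUnit_det _).mp hu2
  set C := M₁⁻¹ * A * M₂⁻¹ with hC
  have hres : M₁⁻¹ - M₂⁻¹ = (w₂ - w₁) • C := by
    have h1 : M₁⁻¹ * (M₂ - M₁) * M₂⁻¹ = M₁⁻¹ - M₂⁻¹ := by
      rw [mul_sub, sub_mul, mul_assoc, Matrix.mul_nonsing_inv _ hd2, mul_one,
        Matrix.nonsing_inv_mul _ hd1, one_mul]
    have h2 : M₂ - M₁ = (w₂ - w₁) • A := by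
      rw [hM₁, hM₂, sub_smul]; abel
    rw [← h1, h2, mul_smul_comm, Matrix.smul_mul]
  have key : star (q : Fin p → ℂ) ⬝ᵥ ((B * M₁⁻¹) *ᵥ (q : Fin p → ℂ)) -
      star (q : Fin p → ℂ) ⬝ᵥ ((B * M₂⁻¹) *ᵥ (q : Fin p → ℂ)) =
      (w₂ - w₁) * (star (q : Fin p → ℂ) ⬝ᵥ ((B * C) *ᵥ (q : Fin p → ℂ))) := by
    rw [← dotProduct_sub, ← sub_mulVec, ← mul_sub, hres, mul_smul_comm,
      smul_mulVec, dotProduct_smul, smul_eq_mul]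
  have hBC : ‖B * C‖ ≤ ‖B‖ * ‖A‖ := by
    have h3 : ‖C‖ ≤ ‖A‖ := by
      have hinv1 := inv_norm_le_one hw₁ hA
      have hinv2 := inv_norm_le_one hw₂ hA
      rw [← hM₁] at hinv1; rw [← hM₂] at hinv2
      calc ‖C‖ ≤ ‖M₁⁻¹ * A‖ * ‖M₂⁻¹‖ := norm_mul_le _ _
        _ ≤ (‖M₁⁻¹‖ * ‖A‖) * ‖M₂⁻¹‖ :=
            mul_le_mul_of_nonneg_right (norm_mul_le _ _) (norm_nonneg _)
        _ ≤ (1 * ‖A‖) * 1 := by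
            apply mul_le_mul _ hinv2 (norm_nonneg _) (by positivity)
            exact mul_le_mul_of_nonneg_right hinv1 (norm_nonneg _)
        _ = ‖A‖ := by ring
    calc ‖B * C‖ ≤ ‖B‖ * ‖C‖ := norm_mul_le _ _
      _ ≤ ‖B‖ * ‖A‖ := mul_le_mul_of_nonneg_left h3 (norm_nonneg _)
  have hCS : ‖star (q : Fin p → ℂ) ⬝ᵥ ((B * C) *ᵥ (q : Fin p → ℂ))‖ ≤
      ‖q‖ * (‖B * C‖ * ‖q‖) := by
    set v : EuclideanSpace ℂ (Fin p) :=
      (EuclideanSpace.equiv (Fin p) ℂ).symm ((B * C) *ᵥ (q : Fin p → ℂ))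
    have hv : star (q : Fin p → ℂ) ⬝ᵥ ((B * C) *ᵥ (q : Fin p → ℂ)) = (inner ℂ q v : ℂ) := by
      rw [EuclideanSpace.inner_eq_star_dotProduct, dotProduct_comm]; rfl
    rw [hv]
    calc ‖(inner ℂ q v : ℂ)‖ ≤ ‖q‖ * ‖v‖ := norm_inner_le_norm q v
      _ ≤ ‖q‖ * (‖B * C‖ * ‖q‖) :=
        mul_le_mul_of_nonneg_left (Matrix.l2_opNorm_mulVec _ _) (norm_nonneg _)
  have habs : ‖w₂ - w₁‖ = ‖w₁ - w₂‖ := norm_sub_rev _ _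
  rw [key, norm_mul, habs]
  have hfin : ‖star (q : Fin p → ℂ) ⬝ᵥ ((B * C) *ᵥ (q : Fin p → ℂ))‖ ≤
      ‖q‖ ^ 2 * ‖B‖ * ‖A‖ := by
    nlinarith [hCS, hBC, norm_nonneg q, norm_nonneg (B * C), sq_nonneg ‖q‖]
  calc ‖w₁ - w₂‖ * ‖star (q : Fin p → ℂ) ⬝ᵥ ((B * C) *ᵥ (q : Fin p → ℂ))‖
      ≤ ‖w₁ - w₂‖ * (‖q‖ ^ 2 * ‖B‖ * ‖A‖) :=
        mul_le_mul_of_nonneg_left hfin (norm_nonneg _)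
    _ = ‖w₁ - w₂‖ * ‖q‖ ^ 2 * ‖B‖ * ‖A‖ := by ring
end

section
/- Let p ≥ 1, let z ∈ ℂ with v = Im(z) > 0, let A be any p×p complex matrix, let B be a p×p Hermitian matrix, let q ∈ ℂ^p, and let θ ∈ ℝ. Then B − zI and B + θqq* − zI are invertible and |tr(((B − zI)⁻¹ − (B + θqq* − zI)⁻¹)A)| ≤ ‖A‖ / v. -/
open Matrix
open scoped Matrix.Norms.L2Operator

set_option linter.unusedSectionVars false
set_option maxHeartbeats 1000000

namespace TRR1P

variable {n : Type*} [Fintype n] [DecidableEq n]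

lemma dotProduct_star_self_eq (x : n → ℂ) :
    star x ⬝ᵥ x = ((∑ i, Complex.normSq (x i) : ℝ) : ℂ) := by
  push_cast
  simp only [dotProduct, Pi.star_apply, Complex.star_def]
  exact Finset.sum_congr rfl fun i _ => (Complex.normSq_eq_conj_mul_self).symm

lemma herm_dot_real {C : Matrix n n ℂ} (hC : C.IsHermitian) (x : n → ℂ) :
    star (star x ⬝ᵥ (C *ᵥ x)) = star x ⬝ᵥ (C *ᵥ x) := by
  rw [← star_dotProduct, star_mulVec, hC.eq, ← dotProduct_mulVec]

lemma isUnit_herm_sub_smul {C : Matrix n n ℂ} (hC : C.IsHermitian) {z : ℂ}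
    (hz : z.im ≠ 0) : IsUnit (C - z • (1 : Matrix n n ℂ)) := by
  rw [← Matrix.mulVec_injective_iff_isUnit]
  intro x₁ x₂ hx
  rw [← sub_eq_zero]
  set x := x₁ - x₂ with hxdef
  have h0 : (C - z • 1) *ᵥ x = 0 := by rw [hxdef, mulVec_sub, hx, sub_self]
  have hCx : C *ᵥ x = z • x := by
    rwa [sub_mulVec, smul_mulVec, one_mulVec, sub_eq_zero] at h0
  have hs := herm_dot_real hC x
  have hsum : star x ⬝ᵥ (C *ᵥ x) = z * ((∑ i, Complex.normSq (x i) : ℝ) : ℂ) := by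
    rw [hCx, dotProduct_smul, smul_eq_mul, dotProduct_star_self_eq]
  have him : (star x ⬝ᵥ (C *ᵥ x)).im = 0 := by
    have := congrArg Complex.im hs
    simp only [Complex.star_def, Complex.conj_im] at this
    linarith
  rw [hsum, Complex.mul_im] at him
  simp only [Complex.ofReal_re, Complex.ofReal_im, mul_zero, zero_add] at him
  have hsum0 : ∑ i, Complex.normSq (x i) = 0 := by
    rcases mul_eq_zero.mp him with h | h
    · exact absurd h hz
    · exact h
  have hall : ∀ i ∈ Finset.univ, Complex.normSq (x i) = 0 :=
    (Finset.sum_eq_zero_iff_of_nonneg fun i _ => Complex.normSq_nonneg _).mp hsum0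
  funext i
  simpa using Complex.normSq_eq_zero.mp (hall i (Finset.mem_univ i))

lemma inv_sub_inv' {S T : Matrix n n ℂ} (hS : IsUnit S) (hT : IsUnit T) :
    S⁻¹ - T⁻¹ = S⁻¹ * (T - S) * T⁻¹ := by
  have hSd : IsUnit S.det := (Matrix.isUnit_iff_isUnit_det S).mp hS
  have hTd : IsUnit T.det := (Matrix.isUnit_iff_isUnit_det T).mp hT
  rw [mul_sub, sub_mul, mul_assoc, mul_nonsing_inv _ hTd, mul_one,
    nonsing_inv_mul _ hSd, one_mul]

lemma trace_vecMulVec_mul (u w : n → ℂ) (P : Matrix n n ℂ) :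
    trace (vecMulVec u w * P) = w ⬝ᵥ (P *ᵥ u) := by
  simp only [trace, diag_apply, mul_apply, vecMulVec_apply, dotProduct, mulVec,
    Finset.mul_sum]
  rw [Finset.sum_comm]
  exact Finset.sum_congr rfl fun j _ => Finset.sum_congr rfl fun i _ => by ring

lemma vecMulVec_mulVec' (u w x : n → ℂ) : vecMulVec u w *ᵥ x = (w ⬝ᵥ x) • u := by
  funext i
  simp only [mulVec, vecMulVec_apply, dotProduct, Pi.smul_apply, smul_eq_mul,
    Finset.sum_mul]
  exact Finset.sum_congr rfl fun j _ => by ring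

noncomputable def en (x : n → ℂ) : ℝ := ‖(WithLp.equiv 2 (n → ℂ)).symm x‖

lemma en_nonneg (x : n → ℂ) : 0 ≤ en x := norm_nonneg _

lemma dot_star_self_en (x : n → ℂ) : star x ⬝ᵥ x = (((en x) ^ 2 : ℝ) : ℂ) := by
  have h : star x ⬝ᵥ x = inner ℂ ((WithLp.equiv 2 (n → ℂ)).symm x) ((WithLp.equiv 2 (n → ℂ)).symm x) := by
    rw [WithLp.equiv_symm_apply, EuclideanSpace.inner_toLp_toLp, dotProduct_comm]
  rw [h]
  push_cast
  exact inner_self_eq_norm_sq_to_K _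

lemma cs_en (w t : n → ℂ) : ‖star w ⬝ᵥ t‖ ≤ en w * en t := by
  have h : star w ⬝ᵥ t = inner ℂ ((WithLp.equiv 2 (n → ℂ)).symm w) ((WithLp.equiv 2 (n → ℂ)).symm t) := by
    rw [WithLp.equiv_symm_apply, EuclideanSpace.inner_toLp_toLp, dotProduct_comm]
  rw [h]
  exact norm_inner_le_norm _ _

lemma en_mulVec_le (A : Matrix n n ℂ) (x : n → ℂ) : en (A *ᵥ x) ≤ ‖A‖ * en x :=
  A.l2_opNorm_mulVec ((WithLp.equiv 2 (n → ℂ)).symm x)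

lemma en_smul (c : ℂ) (x : n → ℂ) : en (c • x) = ‖c‖ * en x := by
  unfold en
  rw [WithLp.equiv_symm_apply, WithLp.toLp_smul, norm_smul]

end TRR1P

/-- **Lemma 2.** Let `z ∈ ℂ` with `v = Im z > 0`, `A` any `p × p` complex matrix, `B` a
`p × p` Hermitian matrix, `q ∈ ℂ^p` and `θ ∈ ℝ`. Then `B − zI` and `B + θqq* − zI` are
invertible and `|tr(((B − zI)⁻¹ − (B + θqq* − zI)⁻¹)A)| ≤ ‖A‖ / v`, where `‖·‖` is the
operator norm and `qq*` the rank-one matrix built from `q`. -/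
theorem trace_resolvent_rank_one_perturbation
    {p : ℕ} (hp : 1 ≤ p) (z : ℂ) (v : ℝ) (hv : z.im = v) (hv0 : 0 < v)
    (A B : Matrix (Fin p) (Fin p) ℂ) (hB : B.IsHermitian)
    (q : Fin p → ℂ) (θ : ℝ) :
    IsUnit (B - z • (1 : Matrix (Fin p) (Fin p) ℂ)) ∧
    IsUnit (B + (θ : ℂ) • vecMulVec q (star q) - z • (1 : Matrix (Fin p) (Fin p) ℂ)) ∧
      ‖(Matrix.trace
            (((B - z • (1 : Matrix (Fin p) (Fin p) ℂ))⁻¹ -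
                (B + (θ : ℂ) • vecMulVec q (star q) -
                  z • (1 : Matrix (Fin p) (Fin p) ℂ))⁻¹) * A))‖
        ≤ ‖A‖ / v := by
  subst hv
  have hz : z.im ≠ 0 := ne_of_gt hv0
  set V : Matrix (Fin p) (Fin p) ℂ := vecMulVec q (star q) with hVdef
  have hV : V.IsHermitian := by
    ext i j
    simp [hVdef, conjTranspose_apply, vecMulVec_apply, mul_comm]
  have hVθ : ((θ : ℂ) • V).IsHermitian := by
    unfold Matrix.IsHermitian
    rw [conjTranspose_smul, hV.eq, Complex.star_def, Complex.conj_ofReal]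
  have hB' : (B + (θ : ℂ) • V).IsHermitian := hB.add hVθ
  set S : Matrix (Fin p) (Fin p) ℂ := B - z • 1 with hSdef
  set T : Matrix (Fin p) (Fin p) ℂ := B + (θ : ℂ) • V - z • 1 with hTdef
  have hUS : IsUnit S := TRR1P.isUnit_herm_sub_smul hB hz
  have hUT : IsUnit T := TRR1P.isUnit_herm_sub_smul hB' hz
  refine ⟨hUS, hUT, ?_⟩
  set R : Matrix (Fin p) (Fin p) ℂ := S⁻¹ with hRdef
  set R' : Matrix (Fin p) (Fin p) ℂ := T⁻¹ with hR'def
  -- conjugate transpose of S and its inverse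
  have hSc : Sᴴ = B - (starRingEnd ℂ z) • 1 := by
    rw [hSdef, conjTranspose_sub, hB.eq, conjTranspose_smul, conjTranspose_one]
    rfl
  have hUSc : IsUnit Sᴴ := by
    rw [hSc]
    exact TRR1P.isUnit_herm_sub_smul hB (by simp [Complex.conj_im, hz])
  have hRc : Rᴴ = (Sᴴ)⁻¹ := S.conjTranspose_nonsing_inv
  -- resolvent identity
  have key : R - R' = (θ : ℂ) • (R * V * R') := by
    have h := TRR1P.inv_sub_inv' hUS hUT
    have hTS : T - S = (θ : ℂ) • V := by
      rw [hTdef, hSdef]; abel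
    rw [hTS, mul_smul_comm, smul_mul_assoc] at h
    exact h
  -- sandwiches for R - Rᴴ
  have hScS : Sᴴ - S = (z - (starRingEnd ℂ) z) • (1 : Matrix (Fin p) (Fin p) ℂ) := by
    rw [hSc, hSdef, sub_smul]; abel
  have sandwich1 : R - Rᴴ = (z - (starRingEnd ℂ) z) • (R * Rᴴ) := by
    have h := TRR1P.inv_sub_inv' hUS hUSc
    rw [hScS, mul_smul_comm, mul_one, smul_mul_assoc, ← hRc] at h
    exact h
  have sandwich2 : R - Rᴴ = (z - (starRingEnd ℂ) z) • (Rᴴ * R) := by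
    have h := TRR1P.inv_sub_inv' hUSc hUS
    have hSSc : S - Sᴴ = ((starRingEnd ℂ) z - z) • (1 : Matrix (Fin p) (Fin p) ℂ) := by
      rw [hSc, hSdef, sub_smul]; abel
    rw [hSSc, mul_smul_comm, mul_one, smul_mul_assoc, ← hRc] at h
    have := congrArg Neg.neg h
    rw [neg_sub, ← neg_smul] at this
    rw [this]
    congr 1
    ring
  -- vectors
  set u : Fin p → ℂ := R *ᵥ q with hudef
  set y : Fin p → ℂ := Rᴴ *ᵥ q with hydef
  set w : Fin p → ℂ := R'ᴴ *ᵥ q with hwdef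
  set a : ℂ := star q ⬝ᵥ u with hadef
  have hstaru : star q ᵥ* Rᴴ = star u := (star_mulVec R q).symm
  have hstary : star q ᵥ* R = star y := by
    rw [hydef, star_mulVec, conjTranspose_conjTranspose]
  have hstarw : star q ᵥ* R' = star w := by
    rw [hwdef, star_mulVec, conjTranspose_conjTranspose]
  have hstar_a : star a = star q ⬝ᵥ y := by
    rw [hadef, hudef, hydef, ← star_dotProduct, star_mulVec, ← dotProduct_mulVec]
  -- imaginary part identities
  have hdiffdot : a - star a = star q ⬝ᵥ ((R - Rᴴ) *ᵥ q) := by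
    rw [hstar_a, hadef, sub_mulVec, dotProduct_sub]
  have im_ua : a.im = z.im * (TRR1P.en u) ^ 2 := by
    have h1 : a - star a = (z - (starRingEnd ℂ) z) * (((TRR1P.en u) ^ 2 : ℝ) : ℂ) := by
      rw [hdiffdot, sandwich2, smul_mulVec, dotProduct_smul, smul_eq_mul,
        ← mulVec_mulVec, dotProduct_mulVec, hstaru, ← hudef, TRR1P.dot_star_self_en]
    have h2 := congrArg Complex.im h1
    simp only [Complex.sub_im, Complex.star_def, Complex.conj_im, Complex.mul_im,
      Complex.ofReal_re, Complex.ofReal_im, mul_zero, zero_add, sub_neg_eq_add] at h2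
    linarith
  have im_ya : a.im = z.im * (TRR1P.en y) ^ 2 := by
    have h1 : a - star a = (z - (starRingEnd ℂ) z) * (((TRR1P.en y) ^ 2 : ℝ) : ℂ) := by
      rw [hdiffdot, sandwich1, smul_mulVec, dotProduct_smul, smul_eq_mul,
        ← mulVec_mulVec, dotProduct_mulVec, hstary, ← hydef, TRR1P.dot_star_self_en]
    have h2 := congrArg Complex.im h1
    simp only [Complex.sub_im, Complex.star_def, Complex.conj_im, Complex.mul_im,
      Complex.ofReal_re, Complex.ofReal_im, mul_zero, zero_add, sub_neg_eq_add] at h2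
    linarith
  have en_uy : TRR1P.en y = TRR1P.en u := by
    have hsq : (TRR1P.en y) ^ 2 = (TRR1P.en u) ^ 2 := by
      exact mul_left_cancel₀ hz (im_ya.symm.trans im_ua)
    nlinarith [TRR1P.en_nonneg u, TRR1P.en_nonneg y]
  -- adjoint of the resolvent identity
  have keyadj : Rᴴ - R'ᴴ = (θ : ℂ) • (R'ᴴ * (V * Rᴴ)) := by
    have h := congrArg Matrix.conjTranspose key
    rw [conjTranspose_sub, conjTranspose_smul, conjTranspose_mul, conjTranspose_mul,
      hV.eq, Complex.star_def, Complex.conj_ofReal] at h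
    exact h
  have y_eq : y = (1 + (θ : ℂ) * star a) • w := by
    have h := congrArg (fun M => M *ᵥ q) keyadj
    simp only [sub_mulVec, smul_mulVec] at h
    rw [← mulVec_mulVec, ← mulVec_mulVec] at h
    rw [← hydef, ← hwdef, TRR1P.vecMulVec_mulVec', ← hstar_a, mulVec_smul, ← hwdef,
      smul_smul] at h
    rw [add_smul, one_smul, ← h]
    abel
  -- trace computation
  have htr : Matrix.trace ((R - R') * A) = (θ : ℂ) * (star w ⬝ᵥ (A *ᵥ u)) := by
    rw [key, smul_mul_assoc, trace_smul, smul_eq_mul]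
    congr 1
    rw [mul_assoc, mul_assoc, trace_mul_comm, mul_assoc, TRR1P.trace_vecMulVec_mul,
      ← mulVec_mulVec, ← mulVec_mulVec, dotProduct_mulVec, hstarw, ← hudef]
  -- final estimate
  rw [htr, norm_mul, Complex.norm_real, Real.norm_eq_abs]
  have hbound : ‖star w ⬝ᵥ (A *ᵥ u)‖ ≤ TRR1P.en w * (‖A‖ * TRR1P.en u) := by
    refine le_trans (TRR1P.cs_en w _) ?_
    have h1 := TRR1P.en_mulVec_le A u
    have h2 := TRR1P.en_nonneg w
    nlinarith
  have hAnn : (0 : ℝ) ≤ ‖A‖ := norm_nonneg _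
  rcases eq_or_lt_of_le (TRR1P.en_nonneg u) with h0 | h0
  · have hle : ‖star w ⬝ᵥ (A *ᵥ u)‖ ≤ 0 := by
      rw [← h0] at hbound
      simpa using hbound
    have h0' : ‖star w ⬝ᵥ (A *ᵥ u)‖ = 0 :=
      le_antisymm hle (norm_nonneg _)
    rw [h0', mul_zero]
    positivity
  · -- en u > 0 case
    have hy : TRR1P.en u = ‖1 + (θ : ℂ) * star a‖ * TRR1P.en w := by
      rw [← en_uy, y_eq, TRR1P.en_smul]
    have himc : (1 + (θ : ℂ) * star a).im = -(θ * (z.im * (TRR1P.en u) ^ 2)) := by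
      simp only [Complex.add_im, Complex.one_im, Complex.mul_im, Complex.ofReal_re,
        Complex.ofReal_im, Complex.star_def, Complex.conj_im, Complex.conj_re,
        zero_mul, add_zero, zero_add, im_ua]
      ring
    have habs : |θ| * (z.im * (TRR1P.en u) ^ 2) ≤ ‖1 + (θ : ℂ) * star a‖ := by
      have h1 : |(1 + (θ : ℂ) * star a).im| ≤ ‖1 + (θ : ℂ) * star a‖ :=
        Complex.abs_im_le_norm _
      rw [himc, abs_neg, abs_mul] at h1
      rwa [abs_of_nonneg (by positivity : (0:ℝ) ≤ z.im * (TRR1P.en u) ^ 2)] at h1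
    have hkey : |θ| * TRR1P.en w * TRR1P.en u * z.im ≤ 1 := by
      have hwnn := TRR1P.en_nonneg w
      nlinarith [hy, habs, h0, hv0]
    rw [le_div_iff₀ hv0]
    calc |θ| * ‖star w ⬝ᵥ (A *ᵥ u)‖ * z.im
        ≤ |θ| * (TRR1P.en w * (‖A‖ * TRR1P.en u)) * z.im := by
          exact mul_le_mul_of_nonneg_right
            (mul_le_mul_of_nonneg_left hbound (abs_nonneg θ)) (le_of_lt hv0)
      _ = ‖A‖ * (|θ| * TRR1P.en w * TRR1P.en u * z.im) := by ring
      _ ≤ ‖A‖ * 1 := by nlinarith [hkey]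
      _ = ‖A‖ := mul_one _
end

section
/- Let z = iv with v > 0, let A be a p×p Hermitian positive semidefinite matrix, let q ∈ ℂ^p, and let a > 0. Then 1 + a·q*(A − zI)⁻¹q ≠ 0 and −(1/z) · (1 + a·q*(A − zI)⁻¹q)⁻¹ lies in Q₁ = {w ∈ ℂ : Re w ≥ 0 and Im w ≥ 0}. -/
open Matrix
open scoped ComplexOrder

private lemma key_arith (v : ℝ) (hv : 0 < v) (z : ℂ) (hz : z = Complex.I * v)
    (w : ℂ) (hre : 0 ≤ w.re) (him : 0 ≤ w.im) (a : ℝ) (ha : 0 < a) :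
    (1 + (a : ℂ) * w ≠ 0) ∧ 0 ≤ (-(1 / z) * (1 + (a : ℂ) * w)⁻¹).re ∧
      0 ≤ (-(1 / z) * (1 + (a : ℂ) * w)⁻¹).im := by
  set s : ℂ := 1 + (a : ℂ) * w with hs
  have hsre : s.re = 1 + a * w.re := by simp [hs, Complex.add_re, Complex.mul_re]
  have hsim : s.im = a * w.im := by simp [hs, Complex.add_im, Complex.mul_im]
  have hsrepos : 0 < s.re := by rw [hsre]; positivity
  have hs0 : s ≠ 0 := by
    intro h
    rw [h] at hsrepos
    simp at hsrepos
  have hv' : (v : ℂ) ≠ 0 := by exact_mod_cast hv.ne'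
  have hc : -(1 / z) = Complex.I / v := by
    rw [hz]
    field_simp
    rw [Complex.I_sq]
  have hN : 0 < Complex.normSq s := Complex.normSq_pos.mpr hs0
  have hcre : (-(1/z)).re = 0 := by rw [hc]; simp [Complex.div_re]
  have hcim : (-(1/z)).im = 1 / v := by
    rw [hc]; simp [Complex.div_im, Complex.normSq]
  have h1 : 0 ≤ 1 / v := by positivity
  refine ⟨hs0, ?_, ?_⟩
  · rw [Complex.mul_re, hcre, hcim, Complex.inv_im, hsim, zero_mul, zero_sub, neg_div,
      mul_neg, neg_neg]
    exact mul_nonneg h1 (div_nonneg (by positivity) hN.le)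
  · rw [Complex.mul_im, hcre, hcim, Complex.inv_re, zero_mul, zero_add]
    exact mul_nonneg h1 (div_nonneg hsrepos.le hN.le)

/-- **Lemma 7.** Let `z = iv` with `v > 0`, `A` a `p × p` Hermitian positive semidefinite
matrix, `q ∈ ℂ^p` and `a > 0`.  Then `1 + a·q*(A − zI)⁻¹q ≠ 0` and
`−(1/z)·(1 + a·q*(A − zI)⁻¹q)⁻¹` lies in `Q₁ = {w ∈ ℂ : Re w ≥ 0 and Im w ≥ 0}`. -/
theorem neg_inv_one_add_quadratic_in_Q1
    {p : ℕ} (v : ℝ) (hv : 0 < v) (z : ℂ) (hz : z = Complex.I * v)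
    (A : Matrix (Fin p) (Fin p) ℂ) (hA : A.PosSemidef)
    (q : Fin p → ℂ) (a : ℝ) (ha : 0 < a) :
    (1 + (a : ℂ) * (star q ⬝ᵥ ((A - z • (1 : Matrix (Fin p) (Fin p) ℂ))⁻¹ *ᵥ q)) ≠ 0) ∧
      0 ≤ (-(1 / z) *
          (1 + (a : ℂ) * (star q ⬝ᵥ ((A - z • (1 : Matrix (Fin p) (Fin p) ℂ))⁻¹ *ᵥ q)))⁻¹).re ∧
      0 ≤ (-(1 / z) *
          (1 + (a : ℂ) * (star q ⬝ᵥ ((A - z • (1 : Matrix (Fin p) (Fin p) ℂ))⁻¹ *ᵥ q)))⁻¹).im := by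
  set B : Matrix (Fin p) (Fin p) ℂ := A - z • 1 with hB
  set w : ℂ := star q ⬝ᵥ (B⁻¹ *ᵥ q) with hw
  refine key_arith v hv z hz w ?_ ?_ a ha
  all_goals {
    by_cases hU : IsUnit B.det
    case neg =>
      rw [hw, Matrix.nonsing_inv_apply_not_isUnit B hU]
      simp
    case pos =>
      set u : Fin p → ℂ := B⁻¹ *ᵥ q with hu
      have hq : B *ᵥ u = q := by
        rw [hu, Matrix.mulVec_mulVec, Matrix.mul_nonsing_inv B hU, Matrix.one_mulVec]
      have hwB : w = star u ⬝ᵥ (Bᴴ *ᵥ u) := by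
        rw [hw, ← hq, Matrix.star_mulVec, Matrix.dotProduct_mulVec,
          Matrix.dotProduct_mulVec, hu, Matrix.dotProduct_mulVec]
      have hBH : Bᴴ = A + z • 1 := by
        rw [hB]
        simp [Matrix.conjTranspose_sub, Matrix.conjTranspose_smul, hA.1.eq, hz,
          Complex.ext_iff, sub_eq_add_neg]
      have hα : (0 : ℂ) ≤ star u ⬝ᵥ (A *ᵥ u) := hA.dotProduct_mulVec_nonneg u
      have hβ : (0 : ℂ) ≤ star u ⬝ᵥ u := dotProduct_star_self_nonneg u
      rw [Complex.le_def] at hα hβ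
      have hwval : w = star u ⬝ᵥ (A *ᵥ u) + z * (star u ⬝ᵥ u) := by
        rw [hwB, hBH, Matrix.add_mulVec, dotProduct_add, Matrix.smul_mulVec,
          Matrix.one_mulVec, dotProduct_smul, smul_eq_mul]
      have hzre : z.re = 0 := by rw [hz]; simp
      have hzim : z.im = v := by rw [hz]; simp
      rw [hwval]
      simp only [Complex.add_re, Complex.add_im, Complex.mul_re, Complex.mul_im,
        hzre, hzim, Complex.zero_re, Complex.zero_im] at *
      nlinarith [hα.1, hα.2, hβ.1, hβ.2, hv]
  }
end

section
/- In the matrix setup below, let z ∈ ℂ be such that M − zI and M_k − zI (for every 1 ≤ k ≤ p) are invertible and 1 + (h_k + t_kk e_k)*(M_k − zI)⁻¹ e_k ≠ 0 for every k. Then tr(M(M − zI)⁻¹) = Σ_{k=1}^p [(h_k + t_kk e_k)*(M_k − zI)⁻¹ e_k] / [1 + (h_k + t_kk e_k)*(M_k − zI)⁻¹ e_k]; equivalently, tr(I + z(M − zI)⁻¹) equals the same sum. -/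
open Matrix

namespace HYRemark2

variable {p n : ℕ}

/-- `w_k`: the conjugate transpose of the `k`-th row of `W`. -/
noncomputable def wk (W : Matrix (Fin p) (Fin n) ℂ) (k : Fin p) : Fin n → ℂ :=
  fun j => star (W k j)

/-- `W_k`: the matrix `W` with its `k`-th row replaced by zeros. -/
def Wdel (W : Matrix (Fin p) (Fin n) ℂ) (k : Fin p) : Matrix (Fin p) (Fin n) ℂ :=
  W.updateRow k 0

/-- `h_k = α · W_k w_k`. -/
noncomputable def hvec (α : ℝ) (W : Matrix (Fin p) (Fin n) ℂ) (k : Fin p) : Fin p → ℂ :=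
  (α : ℂ) • (Wdel W k *ᵥ wk W k)

/-- `t_kk = α (w_k* w_k − τ λ_k)`. -/
noncomputable def tkk (α τ : ℝ) (lam : Fin p → ℝ) (W : Matrix (Fin p) (Fin n) ℂ)
    (k : Fin p) : ℂ :=
  (α : ℂ) * (star (wk W k) ⬝ᵥ wk W k - (τ : ℂ) * (lam k : ℂ))

/-- `M = α (W W* − τ Λ)` where `Λ = diag(λ₁, …, λ_p)`. -/
noncomputable def Mmat (α τ : ℝ) (lam : Fin p → ℝ) (W : Matrix (Fin p) (Fin n) ℂ) :
    Matrix (Fin p) (Fin p) ℂ :=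
  (α : ℂ) • (W * Wᴴ - (τ : ℂ) • Matrix.diagonal fun i => (lam i : ℂ))

/-- `M_k = α (W_k W* − τ Λ_k)` where `Λ_k` is `Λ` with `k`-th diagonal entry zeroed. -/
noncomputable def Mkmat (α τ : ℝ) (lam : Fin p → ℝ) (W : Matrix (Fin p) (Fin n) ℂ)
    (k : Fin p) : Matrix (Fin p) (Fin p) ℂ :=
  (α : ℂ) •
    (Wdel W k * Wᴴ - (τ : ℂ) • Matrix.diagonal fun i => ((Function.update lam k 0) i : ℂ))

/-- `(h_k + t_kk e_k)* (M_k − zI)⁻¹ e_k`. -/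
noncomputable def qform (α τ : ℝ) (lam : Fin p → ℝ) (W : Matrix (Fin p) (Fin n) ℂ)
    (z : ℂ) (k : Fin p) : ℂ :=
  star (hvec α W k + tkk α τ lam W k • (Pi.single k 1 : Fin p → ℂ)) ⬝ᵥ
    ((Mkmat α τ lam W k - z • (1 : Matrix (Fin p) (Fin p) ℂ))⁻¹ *ᵥ
      (Pi.single k 1 : Fin p → ℂ))

lemma Mmat_row (α τ : ℝ) (lam : Fin p → ℝ) (W : Matrix (Fin p) (Fin n) ℂ) (k j : Fin p) :
    Mmat α τ lam W k j =
      star (hvec α W k + tkk α τ lam W k • (Pi.single k 1 : Fin p → ℂ)) j := by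
  simp only [Mmat, hvec, tkk, Wdel, wk, Pi.star_apply, Pi.add_apply, Pi.smul_apply,
    Matrix.smul_apply, Matrix.sub_apply, Matrix.mul_apply, conjTranspose_apply,
    Matrix.diagonal_apply, Pi.single_apply, mulVec, dotProduct, updateRow_apply,
    smul_eq_mul, star_mul', star_sub, star_sum, Complex.star_def, _root_.map_mul, map_sum,
    Complex.conj_ofReal, MonoidWithZeroHom.map_ite_one_zero]
  by_cases hj : j = k
  · subst hj
    simp [Complex.conj_conj, mul_comm]
  · simp [hj, Ne.symm hj, Complex.conj_conj, mul_comm]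

lemma Mkmat_apply (α τ : ℝ) (lam : Fin p → ℝ) (W : Matrix (Fin p) (Fin n) ℂ) (k i j : Fin p) :
    Mkmat α τ lam W k i j = if i = k then 0 else Mmat α τ lam W i j := by
  by_cases hi : i = k
  · subst hi
    simp [Mkmat, Wdel, Matrix.mul_apply, Matrix.diagonal_apply, Function.update_apply]
  · simp [Mkmat, Mmat, Wdel, Matrix.mul_apply, Matrix.diagonal_apply,
      Function.update_apply, hi]



lemma Mmat_mulVec (α τ : ℝ) (lam : Fin p → ℝ) (W : Matrix (Fin p) (Fin n) ℂ) (k : Fin p)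
    (x : Fin p → ℂ) :
    Mmat α τ lam W *ᵥ x =
      Mkmat α τ lam W k *ᵥ x +
        (star (hvec α W k + tkk α τ lam W k • (Pi.single k 1 : Fin p → ℂ)) ⬝ᵥ x) •
          (Pi.single k 1 : Fin p → ℂ) := by
  funext i
  by_cases hi : i = k
  · subst hi
    simp [mulVec, dotProduct, Mkmat_apply, Mmat_row, Pi.single_apply]
  · simp [mulVec, dotProduct, Mkmat_apply, hi, Pi.single_apply,
      fun j => (Mmat_row α τ lam W k j).symm]

/-- **Remark 2.** If `M − zI` and all `M_k − zI` are invertible and all denominators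
`1 + (h_k + t_kk e_k)*(M_k − zI)⁻¹ e_k` are nonzero, then
`tr(M(M − zI)⁻¹) = Σ_k [(h_k + t_kk e_k)*(M_k − zI)⁻¹ e_k]/[1 + (h_k + t_kk e_k)*(M_k − zI)⁻¹ e_k]`,
and `tr(I + z(M − zI)⁻¹)` equals the same sum. -/
theorem trace_resolvent_sum (α τ : ℝ) (hα : 0 < α) (lam : Fin p → ℝ)
    (W : Matrix (Fin p) (Fin n) ℂ) (z : ℂ)
    (hM : IsUnit (Mmat α τ lam W - z • (1 : Matrix (Fin p) (Fin p) ℂ)))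
    (hMk : ∀ k : Fin p, IsUnit (Mkmat α τ lam W k - z • (1 : Matrix (Fin p) (Fin p) ℂ)))
    (hden : ∀ k : Fin p, 1 + qform α τ lam W z k ≠ 0) :
    Matrix.trace
        (Mmat α τ lam W *
          (Mmat α τ lam W - z • (1 : Matrix (Fin p) (Fin p) ℂ))⁻¹) =
        ∑ k : Fin p, qform α τ lam W z k / (1 + qform α τ lam W z k) ∧
      Matrix.trace
          ((1 : Matrix (Fin p) (Fin p) ℂ) +
            z • (Mmat α τ lam W - z • (1 : Matrix (Fin p) (Fin p) ℂ))⁻¹) =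
        ∑ k : Fin p, qform α τ lam W z k / (1 + qform α τ lam W z k) := by
  set A := Mmat α τ lam W - z • (1 : Matrix (Fin p) (Fin p) ℂ) with hA
  have hMdet : IsUnit A.det := (Matrix.isUnit_iff_isUnit_det A).mp hM
  have hMeq : Mmat α τ lam W * A⁻¹ = 1 + z • A⁻¹ := by
    have h1 : Mmat α τ lam W = A + z • (1 : Matrix (Fin p) (Fin p) ℂ) := by
      rw [hA, sub_add_cancel]
    rw [h1, add_mul, Matrix.mul_nonsing_inv _ hMdet, Matrix.smul_mul, one_mul]
  have key : ∀ k : Fin p, (Mmat α τ lam W * A⁻¹) k k =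
      qform α τ lam W z k / (1 + qform α τ lam W z k) := by
    intro k
    set Ak := Mkmat α τ lam W k - z • (1 : Matrix (Fin p) (Fin p) ℂ) with hAk
    have hAkdet : IsUnit Ak.det := (Matrix.isUnit_iff_isUnit_det Ak).mp (hMk k)
    set u := Ak⁻¹ *ᵥ (Pi.single k 1 : Fin p → ℂ) with hu
    set v := hvec α W k + tkk α τ lam W k • (Pi.single k 1 : Fin p → ℂ) with hv
    have hq : qform α τ lam W z k = star v ⬝ᵥ u := rfl
    have hAku : Ak *ᵥ u = Pi.single k 1 := by
      rw [hu, Matrix.mulVec_mulVec, Matrix.mul_nonsing_inv _ hAkdet, Matrix.one_mulVec]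
    have hAu : A *ᵥ u = (1 + qform α τ lam W z k) • (Pi.single k 1 : Fin p → ℂ) := by
      have h2 : Mmat α τ lam W *ᵥ u =
          Mkmat α τ lam W k *ᵥ u + (star v ⬝ᵥ u) • (Pi.single k 1 : Fin p → ℂ) := by
        rw [Mmat_mulVec α τ lam W k u, hv]
      rw [hA, Matrix.sub_mulVec, h2, Matrix.smul_mulVec, Matrix.one_mulVec]
      rw [hAk, Matrix.sub_mulVec, Matrix.smul_mulVec, Matrix.one_mulVec] at hAku
      rw [add_sub_right_comm, hAku, hq, add_smul, one_smul]
    have hinv : A⁻¹ *ᵥ (Pi.single k 1 : Fin p → ℂ) =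
        (1 + qform α τ lam W z k)⁻¹ • u := by
      have h1 : A *ᵥ ((1 + qform α τ lam W z k)⁻¹ • u) = Pi.single k 1 := by
        rw [Matrix.mulVec_smul, hAu, smul_smul, inv_mul_cancel₀ (hden k), one_smul]
      calc A⁻¹ *ᵥ (Pi.single k 1 : Fin p → ℂ)
          = A⁻¹ *ᵥ (A *ᵥ ((1 + qform α τ lam W z k)⁻¹ • u)) := by rw [h1]
        _ = (A⁻¹ * A) *ᵥ ((1 + qform α τ lam W z k)⁻¹ • u) := by
            rw [Matrix.mulVec_mulVec]
        _ = (1 + qform α τ lam W z k)⁻¹ • u := by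
            rw [Matrix.nonsing_inv_mul _ hMdet, Matrix.one_mulVec]
    have hdiag : (Mmat α τ lam W * A⁻¹) k k =
        star v ⬝ᵥ (A⁻¹ *ᵥ (Pi.single k 1 : Fin p → ℂ)) := by
      simp only [Matrix.mul_apply, dotProduct, mulVec, Pi.single_apply, mul_ite, mul_one,
        mul_zero, Finset.sum_ite_eq', Finset.mem_univ, if_true]
      refine Finset.sum_congr rfl fun j _ => ?_
      rw [Mmat_row α τ lam W k j, hv]
    rw [hdiag, hinv, dotProduct_smul, ← hq, smul_eq_mul, div_eq_mul_inv, mul_comm]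
  have hsum : Matrix.trace (Mmat α τ lam W * A⁻¹) =
      ∑ k : Fin p, qform α τ lam W z k / (1 + qform α τ lam W z k) := by
    rw [Matrix.trace]
    exact Finset.sum_congr rfl fun k _ => key k
  exact ⟨hsum, by rw [← hMeq]; exact hsum⟩


end HYRemark2
end

section
/- In the matrix setup below, let z ∈ ℂ be nonzero and such that M̄_k − zI is invertible, where M̄_k = α(W_k W_k* − τΛ_k). Then M_k − zI is also invertible, e_k*(M̄_k − zI)⁻¹ h_k = 0, and (h_k + t_kk e_k)*(M_k − zI)⁻¹ e_k = (h_k*(M̄_k − zI)⁻¹ h_k − t_kk) / z. -/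
open Matrix

namespace HYRemark3

variable {p n : ℕ}

/-- `w_k`: the conjugate transpose of the `k`-th row of `W`. -/
noncomputable def wk (W : Matrix (Fin p) (Fin n) ℂ) (k : Fin p) : Fin n → ℂ :=
  fun j => star (W k j)

/-- `W_k`: the matrix `W` with its `k`-th row replaced by zeros. -/
def Wdel (W : Matrix (Fin p) (Fin n) ℂ) (k : Fin p) : Matrix (Fin p) (Fin n) ℂ :=
  W.updateRow k 0

/-- `h_k = α · W_k w_k`. -/
noncomputable def hvec (α : ℝ) (W : Matrix (Fin p) (Fin n) ℂ) (k : Fin p) : Fin p → ℂ :=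
  (α : ℂ) • (Wdel W k *ᵥ wk W k)

/-- `t_kk = α (w_k* w_k − τ λ_k)`. -/
noncomputable def tkk (α τ : ℝ) (lam : Fin p → ℝ) (W : Matrix (Fin p) (Fin n) ℂ)
    (k : Fin p) : ℂ :=
  (α : ℂ) * (star (wk W k) ⬝ᵥ wk W k - (τ : ℂ) * (lam k : ℂ))

/-- `M_k = α (W_k W* − τ Λ_k)` where `Λ_k` is `Λ` with `k`-th diagonal entry zeroed. -/
noncomputable def Mkmat (α τ : ℝ) (lam : Fin p → ℝ) (W : Matrix (Fin p) (Fin n) ℂ)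
    (k : Fin p) : Matrix (Fin p) (Fin p) ℂ :=
  (α : ℂ) •
    (Wdel W k * Wᴴ - (τ : ℂ) • Matrix.diagonal fun i => ((Function.update lam k 0) i : ℂ))

/-- `M̄_k = α (W_k W_k* − τ Λ_k)`. -/
noncomputable def Mbarmat (α τ : ℝ) (lam : Fin p → ℝ) (W : Matrix (Fin p) (Fin n) ℂ)
    (k : Fin p) : Matrix (Fin p) (Fin p) ℂ :=
  (α : ℂ) •
    (Wdel W k * (Wdel W k)ᴴ -
      (τ : ℂ) • Matrix.diagonal fun i => ((Function.update lam k 0) i : ℂ))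


private lemma abstract_key {m : ℕ} (A : Matrix (Fin m) (Fin m) ℂ) (hA : IsUnit A)
    (h e : Fin m → ℂ) (z t : ℂ) (hz : z ≠ 0)
    (heA : e ᵥ* A = (-z) • e)
    (hAe : A *ᵥ e = (-z) • e)
    (heh : e ⬝ᵥ h = 0) (hhe : star h ⬝ᵥ e = 0) (hee : e ⬝ᵥ e = 1)
    (hstare : star e = e) (hstart : star t = t) :
    IsUnit (A + vecMulVec h e) ∧
      star e ⬝ᵥ (A⁻¹ *ᵥ h) = 0 ∧
      star (h + t • e) ⬝ᵥ ((A + vecMulVec h e)⁻¹ *ᵥ e) =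
        (star h ⬝ᵥ (A⁻¹ *ᵥ h) - t) / z := by
  have hdet : IsUnit A.det := (isUnit_iff_isUnit_det A).mp hA
  have hAAi : A * A⁻¹ = 1 := mul_nonsing_inv A hdet
  have hAiA : A⁻¹ * A = 1 := nonsing_inv_mul A hdet
  set u : Fin m → ℂ := A⁻¹ *ᵥ h with hu
  have hz' : (-z) ≠ 0 := neg_ne_zero.mpr hz
  have heAi : e ᵥ* A⁻¹ = (-z)⁻¹ • e := by
    have h1 : (e ᵥ* A) ᵥ* A⁻¹ = e := by rw [vecMul_vecMul, hAAi, vecMul_one]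
    rw [heA, smul_vecMul] at h1
    calc e ᵥ* A⁻¹ = (-z)⁻¹ • ((-z) • (e ᵥ* A⁻¹)) := by
            rw [smul_smul, inv_mul_cancel₀ hz', one_smul]
      _ = (-z)⁻¹ • e := by rw [h1]
  have hAie : A⁻¹ *ᵥ e = (-z)⁻¹ • e := by
    have h1 : A⁻¹ *ᵥ (A *ᵥ e) = e := by rw [mulVec_mulVec, hAiA, one_mulVec]
    rw [hAe, mulVec_smul] at h1
    calc A⁻¹ *ᵥ e = (-z)⁻¹ • ((-z) • (A⁻¹ *ᵥ e)) := by
            rw [smul_smul, inv_mul_cancel₀ hz', one_smul]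
      _ = (-z)⁻¹ • e := by rw [h1]
  have huk : e ⬝ᵥ u = 0 := by
    rw [hu, dotProduct_mulVec, heAi, smul_dotProduct, heh, smul_zero]
  have claim2 : star e ⬝ᵥ u = 0 := by rw [hstare, huk]
  -- A⁻¹ * vecMulVec h e = vecMulVec u e
  have hAiC : A⁻¹ * vecMulVec h e = vecMulVec u e := by
    ext i j
    simp only [Matrix.mul_apply, vecMulVec_apply, hu, mulVec, dotProduct]
    rw [Finset.sum_mul]
    exact Finset.sum_congr rfl fun l _ => by ring
  set D : Matrix (Fin m) (Fin m) ℂ := vecMulVec u e with hD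
  have hDD : D * D = 0 := by
    ext i j
    simp only [Matrix.mul_apply, vecMulVec_apply, Matrix.zero_apply, hD]
    have : ∑ l, u i * e l * (u l * e j) = u i * ((e ⬝ᵥ u) * e j) := by
      rw [dotProduct, Finset.sum_mul, Finset.mul_sum]
      exact Finset.sum_congr rfl fun l _ => by ring
    rw [this, huk, zero_mul, mul_zero]
  have hDe : D *ᵥ e = u := by
    funext i
    simp only [hD, mulVec, dotProduct, vecMulVec_apply]
    have : ∑ l, u i * e l * e l = u i * (e ⬝ᵥ e) := by
      rw [dotProduct, Finset.mul_sum]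
      exact Finset.sum_congr rfl fun l _ => by ring
    rw [this, hee, mul_one]
  have hmul1 : (1 + D) * (1 - D) = 1 := by
    have h1 : (1 + D) * (1 - D) = 1 - D * D := by noncomm_ring
    rw [h1, hDD, sub_zero]
  have hmul2 : (1 - D) * (1 + D) = 1 := by
    have h1 : (1 - D) * (1 + D) = 1 - D * D := by noncomm_ring
    rw [h1, hDD, sub_zero]
  have hUnitD : IsUnit (1 + D) := ⟨⟨1 + D, 1 - D, hmul1, hmul2⟩, rfl⟩
  have hB : A + vecMulVec h e = A * (1 + D) := by
    rw [mul_add, mul_one, ← hAiC, ← Matrix.mul_assoc, hAAi, Matrix.one_mul]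
  have claim1 : IsUnit (A + vecMulVec h e) := by
    rw [hB]; exact hA.mul hUnitD
  have hDinv : (1 + D)⁻¹ = 1 - D := inv_eq_right_inv hmul1
  have hBinv : (A + vecMulVec h e)⁻¹ = (1 - D) * A⁻¹ := by
    rw [hB, Matrix.mul_inv_rev, hDinv]
  have hBe : (A + vecMulVec h e)⁻¹ *ᵥ e = (-z)⁻¹ • (e - u) := by
    rw [hBinv, ← mulVec_mulVec, hAie, mulVec_smul, sub_mulVec, one_mulVec, hDe, smul_sub]
  refine ⟨claim1, claim2, ?_⟩
  rw [hBe]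
  have hstarsum : star (h + t • e) = star h + t • e := by
    rw [star_add, star_smul, hstare, hstart]
  rw [hstarsum, add_dotProduct, dotProduct_smul, dotProduct_smul,
    dotProduct_sub, dotProduct_sub, hhe, smul_dotProduct, smul_dotProduct, hee, huk]
  simp only [smul_eq_mul, mul_zero, mul_one, zero_sub, sub_zero]
  field_simp
  ring

/-- **Remark 3.** Let `z ≠ 0` with `M̄_k − zI` invertible. Then `M_k − zI` is invertible,
`e_k*(M̄_k − zI)⁻¹ h_k = 0`, and
`(h_k + t_kk e_k)*(M_k − zI)⁻¹ e_k = (h_k*(M̄_k − zI)⁻¹ h_k − t_kk)/z`. -/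
theorem resolvent_rank_one_identity (α τ : ℝ) (hα : 0 < α) (lam : Fin p → ℝ)
    (W : Matrix (Fin p) (Fin n) ℂ) (z : ℂ) (hz : z ≠ 0) (k : Fin p)
    (hMbar : IsUnit (Mbarmat α τ lam W k - z • (1 : Matrix (Fin p) (Fin p) ℂ))) :
    IsUnit (Mkmat α τ lam W k - z • (1 : Matrix (Fin p) (Fin p) ℂ)) ∧
      (star (Pi.single k 1 : Fin p → ℂ) ⬝ᵥ
          ((Mbarmat α τ lam W k - z • (1 : Matrix (Fin p) (Fin p) ℂ))⁻¹ *ᵥ hvec α W k)) = 0 ∧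
      (star (hvec α W k + tkk α τ lam W k • (Pi.single k 1 : Fin p → ℂ)) ⬝ᵥ
          ((Mkmat α τ lam W k - z • (1 : Matrix (Fin p) (Fin p) ℂ))⁻¹ *ᵥ
            (Pi.single k 1 : Fin p → ℂ))) =
        ((star (hvec α W k) ⬝ᵥ
            ((Mbarmat α τ lam W k - z • (1 : Matrix (Fin p) (Fin p) ℂ))⁻¹ *ᵥ hvec α W k)) -
          tkk α τ lam W k) / z := by
  classical
  set e : Fin p → ℂ := (Pi.single k 1 : Fin p → ℂ) with he
  set A : Matrix (Fin p) (Fin p) ℂ :=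
    Mbarmat α τ lam W k - z • (1 : Matrix (Fin p) (Fin p) ℂ) with hAdef
  set h : Fin p → ℂ := hvec α W k with hhdef
  set t : ℂ := tkk α τ lam W k with htdef
  have hWrow : ∀ l, Wdel W k k l = 0 := by
    intro l; simp [Wdel, Matrix.updateRow_self]
  have hk0 : h k = 0 := by
    simp [hhdef, hvec, mulVec, dotProduct, hWrow]
  have hrow : ∀ j, Mbarmat α τ lam W k k j = 0 := by
    intro j
    simp only [Mbarmat, Matrix.smul_apply, Matrix.sub_apply, Matrix.mul_apply,
      conjTranspose_apply, hWrow, zero_mul, Finset.sum_const_zero,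
      Matrix.diagonal_apply, smul_eq_mul]
    rcases eq_or_ne k j with rfl | hkj
    · simp [Function.update_self]
    · simp [hkj]
  have hcol : ∀ i, Mbarmat α τ lam W k i k = 0 := by
    intro i
    simp only [Mbarmat, Matrix.smul_apply, Matrix.sub_apply, Matrix.mul_apply,
      conjTranspose_apply, hWrow, star_zero, mul_zero, Finset.sum_const_zero,
      Matrix.diagonal_apply, smul_eq_mul]
    rcases eq_or_ne i k with rfl | hik
    · simp [Function.update_self]
    · simp [hik]
  have heA : e ᵥ* A = (-z) • e := by
    funext j
    simp only [he, hAdef, single_vecMul, one_mul, Matrix.sub_apply, hrow,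
      Matrix.smul_apply, Matrix.one_apply, Pi.smul_apply, Pi.single_apply,
      smul_eq_mul, zero_sub]
    rcases eq_or_ne j k with rfl | hjk
    · simp [hrow]
    · simp [hjk, Ne.symm hjk, hrow]
  have hAe : A *ᵥ e = (-z) • e := by
    funext i
    simp only [he, hAdef, mulVec_single, mul_one, Matrix.sub_apply, hcol,
      Matrix.smul_apply, Matrix.one_apply, Pi.smul_apply, Pi.single_apply,
      smul_eq_mul, zero_sub]
    rcases eq_or_ne i k with rfl | hik
    · simp [hcol]
    · simp [hik, Ne.symm hik, hcol]
  have heh : e ⬝ᵥ h = 0 := by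
    rw [he, single_dotProduct, hk0, mul_zero]
  have hhe : star h ⬝ᵥ e = 0 := by
    rw [he, dotProduct_single, Pi.star_apply, hk0, star_zero, zero_mul]
  have hee : e ⬝ᵥ e = 1 := by
    simp [he, single_dotProduct]
  have hstare : star e = e := by
    funext i
    rcases eq_or_ne i k with rfl | hik
    · simp [he]
    · simp [he, Pi.single_apply, hik]
  have hstart : star t = t := by
    have h1 : star (star (wk W k) ⬝ᵥ wk W k) = star (wk W k) ⬝ᵥ wk W k :=
      (star_dotProduct _ _).symm
    simp only [htdef, tkk, star_mul', star_sub, h1, Complex.star_def, _root_.map_mul,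
      Complex.conj_ofReal]
  have hMM : Mkmat α τ lam W k - z • (1 : Matrix (Fin p) (Fin p) ℂ) =
      A + vecMulVec h e := by
    have hMM' : Mkmat α τ lam W k = Mbarmat α τ lam W k + vecMulVec h e := by
      ext i j
      simp only [Mkmat, Mbarmat, Matrix.add_apply, Matrix.smul_apply, Matrix.sub_apply,
        Matrix.mul_apply, conjTranspose_apply, vecMulVec_apply, hhdef, hvec,
        Pi.smul_apply, mulVec, dotProduct, wk, smul_eq_mul, he, Pi.single_apply]
      rcases eq_or_ne j k with hjk | hjk
      · rw [if_pos hjk, hjk]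
        simp only [hWrow, star_zero, mul_zero, Finset.sum_const_zero, add_zero, mul_one]
        ring
      · have h2 : ∀ l, Wdel W k j l = W j l := fun l =>
          congrFun (Matrix.updateRow_ne hjk) l
        simp only [h2, if_neg hjk, mul_zero, add_zero]
    rw [hMM', hAdef]
    abel
  have key := abstract_key A hMbar h e z t hz heA hAe heh hhe hee hstare hstart
  rw [hMM]
  exact key


end HYRemark3
end

section
/- Let c > 0, let H be a Borel probability measure on [0, ∞) with ∫ λ² dH(λ) < ∞, and let τ' : [0,1] → [0, ∞) be a measurable function with ∫₀¹ (τ'_t)² dt < ∞. Let v > 0 satisfy v² > c · (∫₀¹ (τ'_t)² dt) · (∫ λ² dH(λ)), and set z = iv. If ṡ₁ and ṡ₂ both lie in Q₁ = {w ∈ ℂ : Re w ≥ 0 and Im w ≥ 0} and both satisfy the fixed-point equation ṡ = −(1/z) ∫ λ / (1 − (λ/z) ∫₀¹ τ'_t/(1 + c·τ'_t·ṡ) dt) dH(λ), then ṡ₁ = ṡ₂. -/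
open MeasureTheory intervalIntegral

private lemma one_le_mul_aux {a b : ℝ} (ha : 1 ≤ a) (hb : 1 ≤ b) : 1 ≤ a * b := by nlinarith

set_option maxHeartbeats 1000000 in
/-- **Uniqueness of the fixed point** (from the proof of Theorem 2).  Let `c > 0`, `H` a
Borel probability measure on `[0, ∞)` with finite second moment, and `τ' : [0,1] → [0,∞)`
measurable and square-integrable.  Let `v > 0` satisfy
`v² > c (∫₀¹ τ'² dt)(∫ λ² dH)` and set `z = iv`.  If `ṡ₁, ṡ₂ ∈ Q₁` both solve
`ṡ = −(1/z) ∫ λ/(1 − (λ/z) ∫₀¹ τ'_t/(1 + c τ'_t ṡ) dt) dH(λ)`, then `ṡ₁ = ṡ₂`. -/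
theorem fixed_point_unique
    (c : ℝ) (hc : 0 < c)
    (H : Measure ℝ) [IsProbabilityMeasure H] (hHsupp : H {x | x < 0} = 0)
    (hH2 : Integrable (fun x => x ^ 2) H)
    (τ' : ℝ → ℝ) (hτ'meas : Measurable τ') (hτ'nonneg : ∀ t, 0 ≤ τ' t)
    (hτ'2 : IntervalIntegrable (fun t => τ' t ^ 2) volume 0 1)
    (v : ℝ) (hv : 0 < v)
    (hvlarge : c * (∫ t in (0:ℝ)..1, τ' t ^ 2) * (∫ x, x ^ 2 ∂H) < v ^ 2)
    (z : ℂ) (hz : z = Complex.I * v)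
    (s₁ s₂ : ℂ)
    (hs₁Q : 0 ≤ s₁.re ∧ 0 ≤ s₁.im) (hs₂Q : 0 ≤ s₂.re ∧ 0 ≤ s₂.im)
    (heq₁ : s₁ = -z⁻¹ * ∫ x, ((x : ℂ) /
        (1 - ((x : ℂ) / z) *
          ∫ t in (0:ℝ)..1, ((τ' t : ℂ) / (1 + (c : ℂ) * (τ' t : ℂ) * s₁)))) ∂H)
    (heq₂ : s₂ = -z⁻¹ * ∫ x, ((x : ℂ) /
        (1 - ((x : ℂ) / z) *
          ∫ t in (0:ℝ)..1, ((τ' t : ℂ) / (1 + (c : ℂ) * (τ' t : ℂ) * s₂)))) ∂H) :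
    s₁ = s₂ := by
  have hvne : (v:ℂ) ≠ 0 := Complex.ofReal_ne_zero.mpr hv.ne'
  have hzne : z ≠ 0 := by rw [hz]; exact mul_ne_zero Complex.I_ne_zero hvne
  -- real and imaginary parts of the inner denominators
  have hre : ∀ (s : ℂ) (t : ℝ),
      (1 + (c : ℂ) * (τ' t : ℂ) * s).re = 1 + c * τ' t * s.re := by
    intro s t; simp [Complex.add_re, Complex.mul_re]
  have him : ∀ (s : ℂ) (t : ℝ),
      (1 + (c : ℂ) * (τ' t : ℂ) * s).im = c * τ' t * s.im := by
    intro s t; simp [Complex.add_im, Complex.mul_im]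
  have hEre : ∀ (s : ℂ), 0 ≤ s.re → ∀ t, (1:ℝ) ≤ (1 + (c : ℂ) * (τ' t : ℂ) * s).re := by
    intro s hs t
    rw [hre]
    nlinarith [mul_nonneg (mul_nonneg hc.le (hτ'nonneg t)) hs]
  have hEnorm : ∀ (s : ℂ), 0 ≤ s.re → ∀ t, (1:ℝ) ≤ ‖1 + (c : ℂ) * (τ' t : ℂ) * s‖ := by
    intro s hs t
    refine le_trans (hEre s hs t) ?_
    exact Complex.re_le_norm _
  have hEne : ∀ (s : ℂ), 0 ≤ s.re → ∀ t, (1 + (c : ℂ) * (τ' t : ℂ) * s) ≠ 0 := by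
    intro s hs t
    intro h
    have h2 := hEnorm s hs t
    rw [h] at h2
    simp at h2
    linarith
  -- measurability of inner integrands
  have hmeasE : ∀ (s : ℂ), Measurable (fun t : ℝ => 1 + (c : ℂ) * (τ' t : ℂ) * s) := by
    intro s
    exact measurable_const.add
      ((measurable_const.mul (Complex.measurable_ofReal.comp hτ'meas)).mul_const s)
  have hmeasf : ∀ (s : ℂ),
      Measurable (fun t : ℝ => (τ' t : ℂ) / (1 + (c : ℂ) * (τ' t : ℂ) * s)) := by
    intro s
    exact (Complex.measurable_ofReal.comp hτ'meas).div (hmeasE s)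
  -- τ' is interval integrable
  have hτ'int : IntervalIntegrable τ' volume 0 1 := by
    have h1 : IntervalIntegrable (fun t : ℝ => 1 + τ' t ^ 2) volume 0 1 :=
      (_root_.intervalIntegrable_const (c := (1:ℝ))).add hτ'2
    refine h1.mono_fun hτ'meas.aestronglyMeasurable (ae_of_all _ fun t => ?_)
    have h2 := hτ'nonneg t
    simp only [Real.norm_eq_abs]
    rw [abs_of_nonneg h2, abs_of_nonneg (by positivity)]
    nlinarith
  -- integrability of the inner integrands
  have hfs_int : ∀ (s : ℂ), 0 ≤ s.re →
      IntervalIntegrable (fun t => (τ' t : ℂ) / (1 + (c : ℂ) * (τ' t : ℂ) * s))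
        volume 0 1 := by
    intro s hs
    refine hτ'int.mono_fun (hmeasf s).aestronglyMeasurable (ae_of_all _ fun t => ?_)
    simp only [norm_div, Complex.norm_real, Real.norm_eq_abs]
    rw [abs_of_nonneg (hτ'nonneg t)]
    exact div_le_self (hτ'nonneg t) (hEnorm s hs t)
  -- the inner integrals
  set g₁ : ℂ := ∫ t in (0:ℝ)..1, ((τ' t : ℂ) / (1 + (c : ℂ) * (τ' t : ℂ) * s₁)) with hg₁def
  set g₂ : ℂ := ∫ t in (0:ℝ)..1, ((τ' t : ℂ) / (1 + (c : ℂ) * (τ' t : ℂ) * s₂)) with hg₂def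
  -- sign facts for g
  have hgim : ∀ (s : ℂ), 0 ≤ s.re → 0 ≤ s.im →
      (∫ t in (0:ℝ)..1, ((τ' t : ℂ) / (1 + (c : ℂ) * (τ' t : ℂ) * s))).im ≤ 0 := by
    intro s hs hsim
    rw [intervalIntegral.integral_of_le (zero_le_one)]
    have hint : IntegrableOn (fun t => (τ' t : ℂ) / (1 + (c : ℂ) * (τ' t : ℂ) * s))
        (Set.Ioc (0:ℝ) 1) volume := (hfs_int s hs).1
    have him2 : (∫ t in Set.Ioc (0:ℝ) 1, ((τ' t : ℂ) / (1 + (c : ℂ) * (τ' t : ℂ) * s))).im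
        = ∫ t in Set.Ioc (0:ℝ) 1, ((τ' t : ℂ) / (1 + (c : ℂ) * (τ' t : ℂ) * s)).im := by
      have h3 := Complex.imCLM.integral_comp_comm hint
      simpa using h3.symm
    rw [him2]
    refine integral_nonpos fun t => ?_
    have hden := hEre s hs t
    have himden : 0 ≤ (1 + (c : ℂ) * (τ' t : ℂ) * s).im := by
      rw [him]
      exact mul_nonneg (mul_nonneg hc.le (hτ'nonneg t)) hsim
    show ((τ' t : ℂ) / (1 + (c : ℂ) * (τ' t : ℂ) * s)).im ≤ 0
    rw [div_eq_mul_inv]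
    simp only [Complex.mul_im, Complex.ofReal_re, Complex.ofReal_im, zero_mul, add_zero]
    refine mul_nonpos_of_nonneg_of_nonpos (hτ'nonneg t) ?_
    rw [Complex.inv_im]
    apply div_nonpos_of_nonpos_of_nonneg
    · linarith
    · exact Complex.normSq_nonneg _
  have hg₁im : g₁.im ≤ 0 := hgim s₁ hs₁Q.1 hs₁Q.2
  have hg₂im : g₂.im ≤ 0 := hgim s₂ hs₂Q.1 hs₂Q.2
  -- structure of x/z
  have hxz : ∀ x : ℝ, (x:ℂ)/z = ((x/v : ℝ):ℂ) * (-Complex.I) := by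
    intro x
    rw [hz, div_eq_iff (mul_ne_zero Complex.I_ne_zero hvne)]
    push_cast
    field_simp
    ring_nf
    simp [Complex.I_sq]
  -- outer denominators have real part at least 1
  have hDre : ∀ (g : ℂ), g.im ≤ 0 → ∀ x : ℝ, 0 ≤ x →
      (1:ℝ) ≤ (1 - ((x:ℂ)/z) * g).re := by
    intro g hg x hx
    have h1 : (((x:ℂ)/z) * g).re = (x/v) * g.im := by
      rw [hxz x, mul_assoc]
      simp [Complex.mul_re]
    rw [Complex.sub_re, h1]
    have h3 : (x/v) * g.im ≤ 0 := mul_nonpos_of_nonneg_of_nonpos (div_nonneg hx hv.le) hg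
    simp only [Complex.one_re]
    linarith
  have hDnorm : ∀ (g : ℂ), g.im ≤ 0 → ∀ x : ℝ, 0 ≤ x →
      (1:ℝ) ≤ ‖1 - ((x:ℂ)/z) * g‖ := by
    intro g hg x hx
    refine le_trans (hDre g hg x hx) ?_
    exact Complex.re_le_norm _
  have hDne : ∀ (g : ℂ), g.im ≤ 0 → ∀ x : ℝ, 0 ≤ x →
      (1 - ((x:ℂ)/z) * g) ≠ 0 := by
    intro g hg x hx h
    have h2 := hDnorm g hg x hx
    rw [h] at h2
    simp at h2
    linarith
  -- a.e. nonnegativity under H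
  have haeNonneg : ∀ᵐ (x : ℝ) ∂H, 0 ≤ x := by
    rw [ae_iff]
    have hset : {x : ℝ | ¬ 0 ≤ x} = {x | x < 0} := by ext x; simp [not_le]
    rw [hset]
    exact hHsupp
  -- measurability of outer denominators
  have hmeasD : ∀ (g : ℂ), Measurable (fun x : ℝ => 1 - ((x:ℂ)/z) * g) := by
    intro g
    exact measurable_const.sub ((Complex.measurable_ofReal.div_const z).mul_const g)
  -- integrability of the outer integrands
  have hIntxD : ∀ (g : ℂ), g.im ≤ 0 →
      Integrable (fun x : ℝ => (x:ℂ) / (1 - ((x:ℂ)/z) * g)) H := by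
    intro g hg
    refine Integrable.mono' ((integrable_const (1:ℝ)).add hH2)
      ((Complex.measurable_ofReal.div (hmeasD g)).aestronglyMeasurable) ?_
    filter_upwards [haeNonneg] with x hx
    simp only [norm_div, Complex.norm_real, Real.norm_eq_abs]
    rw [abs_of_nonneg hx]
    calc x / ‖1 - ((x:ℂ)/z) * g‖ ≤ x := div_le_self hx (hDnorm g hg x hx)
      _ ≤ 1 + x ^ 2 := by nlinarith
  have hIntB : Integrable (fun x : ℝ =>
      (x:ℂ)^2 / ((1 - ((x:ℂ)/z) * g₁) * (1 - ((x:ℂ)/z) * g₂))) H := by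
    refine Integrable.mono' hH2
      (((Complex.measurable_ofReal.pow_const 2).div
        ((hmeasD g₁).mul (hmeasD g₂))).aestronglyMeasurable) ?_
    filter_upwards [haeNonneg] with x hx
    simp only [norm_div, norm_mul, norm_pow, Complex.norm_real, Real.norm_eq_abs, sq_abs]
    have hge : (1:ℝ) ≤ ‖1 - ((x:ℂ)/z) * g₁‖ * ‖1 - ((x:ℂ)/z) * g₂‖ :=
      one_le_mul_aux (hDnorm g₁ hg₁im x hx) (hDnorm g₂ hg₂im x hx)
    exact div_le_self (sq_nonneg x) hge
  -- key pointwise identity for the H-integral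
  set B : ℂ := ∫ x : ℝ, ((x:ℂ)^2 / ((1 - ((x:ℂ)/z) * g₁) * (1 - ((x:ℂ)/z) * g₂))) ∂H
    with hBdef
  have hpt : ∀ᵐ (x : ℝ) ∂H,
      (x:ℂ) / (1 - ((x:ℂ)/z) * g₁) - (x:ℂ) / (1 - ((x:ℂ)/z) * g₂)
        = (g₁ - g₂)/z * ((x:ℂ)^2 / ((1 - ((x:ℂ)/z) * g₁) * (1 - ((x:ℂ)/z) * g₂))) := by
    filter_upwards [haeNonneg] with x hx
    have h1 := hDne g₁ hg₁im x hx
    have h2 := hDne g₂ hg₂im x hx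
    have hgen : ∀ (a b w : ℂ), a ≠ 0 → b ≠ 0 → w/a - w/b = (b - a) * (w/(a*b)) := by
      intro a b w ha hb; field_simp
    calc (x:ℂ) / (1 - ((x:ℂ)/z) * g₁) - (x:ℂ) / (1 - ((x:ℂ)/z) * g₂)
        = ((1 - ((x:ℂ)/z) * g₂) - (1 - ((x:ℂ)/z) * g₁)) *
            ((x:ℂ)/((1 - ((x:ℂ)/z) * g₁) * (1 - ((x:ℂ)/z) * g₂))) := hgen _ _ _ h1 h2
      _ = (g₁ - g₂)/z * ((x:ℂ)^2 / ((1 - ((x:ℂ)/z) * g₁) * (1 - ((x:ℂ)/z) * g₂))) := by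
          rw [div_eq_mul_inv, div_eq_mul_inv, div_eq_mul_inv, div_eq_mul_inv]
          ring
  have hstep1 : s₁ - s₂ = -z⁻¹ * ((g₁ - g₂)/z * B) := by
    calc s₁ - s₂
        = -z⁻¹ * ((∫ x : ℝ, ((x:ℂ) / (1 - ((x:ℂ)/z) * g₁)) ∂H)
            - (∫ x : ℝ, ((x:ℂ) / (1 - ((x:ℂ)/z) * g₂)) ∂H)) := by
          rw [heq₁, heq₂]; ring
      _ = -z⁻¹ * (∫ x : ℝ, ((x:ℂ) / (1 - ((x:ℂ)/z) * g₁)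
            - (x:ℂ) / (1 - ((x:ℂ)/z) * g₂)) ∂H) := by
          rw [MeasureTheory.integral_sub (hIntxD g₁ hg₁im) (hIntxD g₂ hg₂im)]
      _ = -z⁻¹ * (∫ x : ℝ, ((g₁ - g₂)/z *
            ((x:ℂ)^2 / ((1 - ((x:ℂ)/z) * g₁) * (1 - ((x:ℂ)/z) * g₂)))) ∂H) := by
          rw [integral_congr_ae hpt]
      _ = -z⁻¹ * ((g₁ - g₂)/z * B) := by
          rw [MeasureTheory.integral_const_mul, hBdef]
  -- key pointwise identity for the t-integral
  set A : ℂ := ∫ t in (0:ℝ)..1, ((τ' t : ℂ)^2 /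
      ((1 + (c : ℂ) * (τ' t : ℂ) * s₁) * (1 + (c : ℂ) * (τ' t : ℂ) * s₂))) with hAdef
  have hA_int : IntervalIntegrable (fun t => ((τ' t : ℂ)^2 /
      ((1 + (c : ℂ) * (τ' t : ℂ) * s₁) * (1 + (c : ℂ) * (τ' t : ℂ) * s₂))))
      volume 0 1 := by
    refine hτ'2.mono_fun (((Complex.measurable_ofReal.comp hτ'meas).pow_const 2).div
      ((hmeasE s₁).mul (hmeasE s₂))).aestronglyMeasurable (ae_of_all _ fun t => ?_)
    simp only [norm_div, norm_mul, norm_pow, Complex.norm_real, Real.norm_eq_abs, sq_abs]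
    have hge : (1:ℝ) ≤ ‖1 + (c : ℂ) * (τ' t : ℂ) * s₁‖ * ‖1 + (c : ℂ) * (τ' t : ℂ) * s₂‖ :=
      one_le_mul_aux (hEnorm s₁ hs₁Q.1 t) (hEnorm s₂ hs₂Q.1 t)
    exact div_le_self (sq_nonneg (τ' t)) hge
  have hptT : ∀ t : ℝ,
      (τ' t : ℂ) / (1 + (c : ℂ) * (τ' t : ℂ) * s₁)
        - (τ' t : ℂ) / (1 + (c : ℂ) * (τ' t : ℂ) * s₂)
      = (c : ℂ) * (s₂ - s₁) * ((τ' t : ℂ)^2 /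
          ((1 + (c : ℂ) * (τ' t : ℂ) * s₁) * (1 + (c : ℂ) * (τ' t : ℂ) * s₂))) := by
    intro t
    have h1 := hEne s₁ hs₁Q.1 t
    have h2 := hEne s₂ hs₂Q.1 t
    have hgen : ∀ (a b w : ℂ), a ≠ 0 → b ≠ 0 → w/a - w/b = (b - a) * (w/(a*b)) := by
      intro a b w ha hb; field_simp
    calc (τ' t : ℂ) / (1 + (c : ℂ) * (τ' t : ℂ) * s₁)
          - (τ' t : ℂ) / (1 + (c : ℂ) * (τ' t : ℂ) * s₂)
        = ((1 + (c : ℂ) * (τ' t : ℂ) * s₂) - (1 + (c : ℂ) * (τ' t : ℂ) * s₁)) *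
            ((τ' t : ℂ)/((1 + (c : ℂ) * (τ' t : ℂ) * s₁) * (1 + (c : ℂ) * (τ' t : ℂ) * s₂)))
          := hgen _ _ _ h1 h2
      _ = (c : ℂ) * (s₂ - s₁) * ((τ' t : ℂ)^2 /
            ((1 + (c : ℂ) * (τ' t : ℂ) * s₁) * (1 + (c : ℂ) * (τ' t : ℂ) * s₂))) := by
          rw [div_eq_mul_inv, div_eq_mul_inv]
          ring
  have hstep2 : g₁ - g₂ = (c : ℂ) * (s₂ - s₁) * A := by
    rw [hg₁def, hg₂def,
      ← intervalIntegral.integral_sub (hfs_int s₁ hs₁Q.1) (hfs_int s₂ hs₂Q.1)]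
    rw [intervalIntegral.integral_congr (g := fun t => (c : ℂ) * (s₂ - s₁) *
      ((τ' t : ℂ)^2 / ((1 + (c : ℂ) * (τ' t : ℂ) * s₁) * (1 + (c : ℂ) * (τ' t : ℂ) * s₂))))
      (fun t _ => hptT t)]
    rw [intervalIntegral.integral_const_mul, hAdef]
  -- the contraction identity
  have hKd : s₁ - s₂ = (z⁻¹ * z⁻¹ * (c:ℂ) * A * B) * (s₁ - s₂) := by
    rw [hstep2] at hstep1
    calc s₁ - s₂ = -z⁻¹ * (((c : ℂ) * (s₂ - s₁) * A)/z * B) := hstep1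
      _ = (z⁻¹ * z⁻¹ * (c:ℂ) * A * B) * (s₁ - s₂) := by
          rw [div_eq_mul_inv]
          ring
  -- norm bounds
  have hnormzinv : ‖z⁻¹‖ = v⁻¹ := by
    rw [hz, norm_inv]
    simp [Complex.norm_real, Real.norm_eq_abs, abs_of_pos hv]
  have hTnonneg : (0:ℝ) ≤ ∫ t in (0:ℝ)..1, τ' t ^ 2 :=
    intervalIntegral.integral_nonneg zero_le_one (fun t _ => sq_nonneg _)
  have hMnonneg : (0:ℝ) ≤ ∫ x, x ^ 2 ∂H := integral_nonneg fun x => sq_nonneg x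
  have hAbound : ‖A‖ ≤ ∫ t in (0:ℝ)..1, τ' t ^ 2 := by
    rw [hAdef]
    refine le_trans (intervalIntegral.norm_integral_le_integral_norm zero_le_one) ?_
    refine intervalIntegral.integral_mono_on zero_le_one hA_int.norm hτ'2 fun t _ => ?_
    simp only [norm_div, norm_mul, norm_pow, Complex.norm_real, Real.norm_eq_abs, sq_abs]
    have hge : (1:ℝ) ≤ ‖1 + (c : ℂ) * (τ' t : ℂ) * s₁‖ * ‖1 + (c : ℂ) * (τ' t : ℂ) * s₂‖ :=
      one_le_mul_aux (hEnorm s₁ hs₁Q.1 t) (hEnorm s₂ hs₂Q.1 t)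
    exact div_le_self (sq_nonneg (τ' t)) hge
  have hBbound : ‖B‖ ≤ ∫ x, x ^ 2 ∂H := by
    rw [hBdef]
    refine norm_integral_le_of_norm_le hH2 ?_
    filter_upwards [haeNonneg] with x hx
    simp only [norm_div, norm_mul, norm_pow, Complex.norm_real, Real.norm_eq_abs, sq_abs]
    have hge : (1:ℝ) ≤ ‖1 - ((x:ℂ)/z) * g₁‖ * ‖1 - ((x:ℂ)/z) * g₂‖ :=
      one_le_mul_aux (hDnorm g₁ hg₁im x hx) (hDnorm g₂ hg₂im x hx)
    exact div_le_self (sq_nonneg x) hge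
  have hKnorm : ‖z⁻¹ * z⁻¹ * (c:ℂ) * A * B‖ < 1 := by
    have hexp : ‖z⁻¹ * z⁻¹ * (c:ℂ) * A * B‖ = v⁻¹ * v⁻¹ * c * ‖A‖ * ‖B‖ := by
      rw [norm_mul, norm_mul, norm_mul, norm_mul, hnormzinv]
      simp [Complex.norm_real, Real.norm_eq_abs, abs_of_pos hc]
    rw [hexp]
    have h1 : c * ‖A‖ * ‖B‖ ≤ c * (∫ t in (0:ℝ)..1, τ' t ^ 2) * (∫ x, x ^ 2 ∂H) := by
      have hmm : ‖A‖ * ‖B‖ ≤ (∫ t in (0:ℝ)..1, τ' t ^ 2) * (∫ x, x ^ 2 ∂H) :=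
        mul_le_mul hAbound hBbound (norm_nonneg B) hTnonneg
      calc c * ‖A‖ * ‖B‖ = c * (‖A‖ * ‖B‖) := by ring
        _ ≤ c * ((∫ t in (0:ℝ)..1, τ' t ^ 2) * (∫ x, x ^ 2 ∂H)) :=
            mul_le_mul_of_nonneg_left hmm hc.le
        _ = c * (∫ t in (0:ℝ)..1, τ' t ^ 2) * (∫ x, x ^ 2 ∂H) := by ring
    have h2 : c * ‖A‖ * ‖B‖ < v ^ 2 := lt_of_le_of_lt h1 hvlarge
    have h3 : v⁻¹ * v⁻¹ * c * ‖A‖ * ‖B‖ = (c * ‖A‖ * ‖B‖) / (v * v) := by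
      rw [div_eq_mul_inv, mul_inv]
      ring
    rw [h3, div_lt_one (by positivity)]
    nlinarith [h2]
  -- conclude
  have hd : ‖s₁ - s₂‖ = ‖z⁻¹ * z⁻¹ * (c:ℂ) * A * B‖ * ‖s₁ - s₂‖ := by
    rw [← norm_mul, ← hKd]
  have hzero : ‖s₁ - s₂‖ = 0 := by nlinarith [norm_nonneg (s₁ - s₂), hd, hKnorm]
  exact sub_eq_zero.mp (norm_eq_zero.mp hzero)
end
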